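/- Let K be an abelian group with automorphism t and let (I_1,I_2) be a pair of valuations for K with constants C, b, where b > 0. Let a ∈ K be nonzero. Then there exists N ∈ ℕ such that for all n ≥ N: t^n a + t^{-n} a ≠ 0, and bn + I_1(a) − 2C ≤ I_1(t^n a + t^{-n} a) ≤ bn + I_1(a) + 2C. -/

import Mathlib

/-- A pair of valuations for an abelian group `K` with automorphism `t` and
constants `C`, `b`.  The functions `I₁ I₂ : K → ℝ` are only meaningful on
nonzero elements. -/
def IsPairOfValuations1 {K : Type*} [AddCommGroup K] (t : AddAut K)
    (I₁ I₂ : K → ℝ) (C b : ℝ) : Prop :=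
  (∀ k : K, k ≠ 0 → I₁ (t k) = I₁ k + b ∧ I₂ (t k) = I₂ k - b) ∧
  (∀ k : K, k ≠ 0 → I₁ (-k) = I₁ k ∧ I₂ (-k) = I₂ k) ∧
  (∀ k₁ k₂ : K, k₁ ≠ 0 → k₂ ≠ 0 → k₁ + k₂ ≠ 0 →
      I₁ (k₁ + k₂) ≤ max (I₁ k₁) (I₁ k₂) + C ∧
      I₂ (k₁ + k₂) ≤ max (I₂ k₁) (I₂ k₂) + C)

/-- asymptotic value of `I₁ (tⁿa + t⁻ⁿa)`. -/
theorem stmt18 {K : Type*} [AddCommGroup K] (t : AddAut K)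
    (I₁ I₂ : K → ℝ) (C b : ℝ)
    (hval : IsPairOfValuations1 t I₁ I₂ C b) (hb : 0 < b)
    (a : K) (ha : a ≠ 0) :
    ∃ N : ℕ, ∀ n : ℕ, N ≤ n →
      ((n : ℤ) • t) a + ((-(n : ℤ)) • t) a ≠ 0 ∧
      b * n + I₁ a - 2 * C ≤ I₁ (((n : ℤ) • t) a + ((-(n : ℤ)) • t) a) ∧
      I₁ (((n : ℤ) • t) a + ((-(n : ℤ)) • t) a) ≤ b * n + I₁ a + 2 * C := by
  obtain ⟨h1, h2, h3⟩ := hval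
  -- nonzero under powers of t
  have hinj : ∀ m : ℤ, ∀ k : K, k ≠ 0 → (m • t) k ≠ 0 := by
    intro m k hk h
    apply hk
    have := congrArg (⇑(-(m • t))) h
    simpa using this
  -- I₁ under t⁻¹
  have hinv : ∀ k : K, k ≠ 0 → I₁ ((-t) k) = I₁ k - b := by
    intro k hk
    have hk' : (-t) k ≠ 0 := by
      simpa using hinj (-1) k hk
    have := (h1 ((-t) k) hk').1
    simp only [AddAut.apply_neg_self, AddAut.neg_apply_self] at this
    linarith
  -- I₁ under t^m
  have hpow : ∀ m : ℤ, ∀ k : K, k ≠ 0 → I₁ ((m • t) k) = I₁ k + m * b := by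
    intro m
    induction m using Int.induction_on with
    | zero => intro k hk; simp
    | succ i ih =>
      intro k hk
      have e : (((i : ℤ) + 1) • t) k = ((i : ℤ) • t) (t k) := by
        rw [add_zsmul, one_zsmul]; rfl
      have htk : t k ≠ 0 := by simpa using hinj 1 k hk
      rw [e, ih (t k) htk, (h1 k hk).1]
      push_cast; ring
    | pred i ih =>
      intro k hk
      have e : ((-(i : ℤ) - 1) • t) k = ((-(i : ℤ)) • t) ((-t) k) := by
        rw [sub_eq_add_neg, add_zsmul, neg_one_zsmul]; rfl
      have htk : (-t) k ≠ 0 := by simpa using hinj (-1) k hk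
      rw [e, ih ((-t) k) htk, hinv k hk]
      push_cast; ring
  -- C ≥ 0
  have hta : t a ≠ 0 := by simpa using hinj 1 a ha
  have hI1ta : I₁ (t a) = I₁ a + b := (h1 a ha).1
  have hsum : a + t a ≠ 0 := by
    intro h
    have : t a = -a := by linear_combination (norm := abel) h
    rw [this, (h2 a ha).1] at hI1ta
    linarith
  have hC : 0 ≤ C := by
    have hu : I₁ (a + t a) ≤ max (I₁ a) (I₁ (t a)) + C :=
      (h3 a (t a) ha hta hsum).1
    have e2 : (a + t a) + (-a) = t a := by abel
    have hl : I₁ (t a) ≤ max (I₁ (a + t a)) (I₁ (-a)) + C := by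
      have := (h3 (a + t a) (-a) hsum (by simpa using ha) (by rw [e2]; exact hta)).1
      rwa [e2] at this
    rw [(h2 a ha).1, hI1ta] at hl
    rw [hI1ta] at hu
    rcases max_cases (I₁ (a + t a)) (I₁ a) with ⟨h, _⟩ | ⟨h, _⟩ <;>
      rw [h] at hl
    · have : I₁ (a + t a) ≤ max (I₁ a) (I₁ a + b) + C := hu
      rw [max_eq_right (by linarith)] at this
      linarith
    · linarith
  -- choose N
  refine ⟨⌈C / (2 * b)⌉₊ + 1, fun n hn => ?_⟩
  have hn1 : 1 ≤ n := le_trans (Nat.le_add_left 1 _) hn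
  have hnR : C < 2 * b * n := by
    have h1' : C / (2 * b) ≤ (⌈C / (2 * b)⌉₊ : ℝ) := Nat.le_ceil _
    have h2' : ((⌈C / (2 * b)⌉₊ : ℝ)) < n := by
      exact_mod_cast Nat.lt_of_lt_of_le (Nat.lt_succ_self _) hn
    have := lt_of_le_of_lt h1' h2'
    calc C = (C / (2 * b)) * (2 * b) := by field_simp
    _ < n * (2 * b) := by
        apply mul_lt_mul_of_pos_right this; positivity
    _ = 2 * b * n := by ring
  set x := ((n : ℤ) • t) a with hx
  set y := ((-(n : ℤ)) • t) a with hy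
  have hxne : x ≠ 0 := hinj _ a ha
  have hyne : y ≠ 0 := hinj _ a ha
  have hIx : I₁ x = I₁ a + n * b := by rw [hx, hpow _ a ha]; push_cast; ring
  have hIy : I₁ y = I₁ a - n * b := by rw [hy, hpow _ a ha]; push_cast; ring
  have hxyne : x + y ≠ 0 := by
    intro h
    have hyx : y = -x := by linear_combination (norm := abel) h
    have : I₁ y = I₁ x := by rw [hyx, (h2 x hxne).1]
    rw [hIx, hIy] at this
    have hnb : (0:ℝ) < n * b := by
      have : (1:ℝ) ≤ n := by exact_mod_cast hn1
      nlinarith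
    linarith
  refine ⟨hxyne, ?_, ?_⟩
  · -- lower bound
    have e2 : (x + y) + (-y) = x := by abel
    have hl : I₁ x ≤ max (I₁ (x + y)) (I₁ (-y)) + C := by
      have := (h3 (x + y) (-y) hxyne (by simpa using hyne) (by rw [e2]; exact hxne)).1
      rwa [e2] at this
    rw [(h2 y hyne).1, hIx, hIy] at hl
    rcases max_cases (I₁ (x + y)) (I₁ a - n * b) with ⟨h, _⟩ | ⟨h, _⟩ <;>
      rw [h] at hl
    · linarith
    · nlinarith
  · -- upper bound
    have hu : I₁ (x + y) ≤ max (I₁ x) (I₁ y) + C := (h3 x y hxne hyne hxyne).1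
    rw [hIx, hIy] at hu
    have hmax : max (I₁ a + n * b) (I₁ a - n * b) = I₁ a + n * b := by
      apply max_eq_left
      have : (0:ℝ) ≤ n := by positivity
      nlinarith
    rw [hmax] at hu
    linarith
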